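/- Let k ≥ 1 be an integer and let w be a real number. Then the sets S' = {ξ ∈ ℝ : ω_k(ξ) > w} and S'^lead = {ξ ∈ ℝ : ω_k^lead(ξ) > w} have the same Hausdorff dimension. -/

import Mathlib

open Polynomial Filter

/-- The height (maximum absolute value of coefficients) of an integer polynomial,
as a real number. -/
noncomputable def intPolyNorm (P : Polynomial ℤ) : ℝ :=
  ((P.support.sup fun i => (P.coeff i).natAbs : ℕ) : ℝ)

/-- The height (maximum absolute value of coefficients) of a real polynomial. -/
noncomputable def realPolyNorm (P : Polynomial ℝ) : ℝ :=
  (Finset.range (P.natDegree + 1)).sup' Finset.nonempty_range_add_one fun i => |P.coeff i|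

/-- The maximum norm of an integer vector, as a real number. -/
noncomputable def vecNorm {n : ℕ} (x : Fin (n + 1) → ℤ) : ℝ :=
  ((Finset.univ.sup fun i => (x i).natAbs : ℕ) : ℝ)

/-- The exponent `ω_n(ξ)`: the supremum (in `EReal`) of all `ω ∈ ℝ` for which there are
infinitely many nonzero `P ∈ ℤ[x]` with `deg P ≤ n` and `|P(ξ)| ≤ ‖P‖ ^ (-ω)`. -/
noncomputable def omegaExp (n : ℕ) (ξ : ℝ) : EReal :=
  sSup (Real.toEReal '' {ω : ℝ |
    {P : Polynomial ℤ | P ≠ 0 ∧ P.natDegree ≤ n ∧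
      |Polynomial.aeval ξ P| ≤ intPolyNorm P ^ (-ω)}.Infinite})

/-- The exponent `ω_n^lead(ξ)`: as `ω_n(ξ)`, but restricted to polynomials whose
coefficient of `x^n` has absolute value equal to the height. -/
noncomputable def omegaLeadExp (n : ℕ) (ξ : ℝ) : EReal :=
  sSup (Real.toEReal '' {ω : ℝ |
    {P : Polynomial ℤ | P ≠ 0 ∧ P.natDegree ≤ n ∧
      ((P.coeff n).natAbs : ℝ) = intPolyNorm P ∧
      |Polynomial.aeval ξ P| ≤ intPolyNorm P ^ (-ω)}.Infinite})

/-- The exponent `λ_n(ξ)`: the supremum (in `EReal`) of all `λ ∈ ℝ` for which there are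
infinitely many nonzero `x = (x_0, …, x_n) ∈ ℤ^{n+1}` with
`max_{1 ≤ m ≤ n} |x_0 ξ^m − x_m| ≤ ‖x‖ ^ (−λ)`. -/
noncomputable def lambdaExp (n : ℕ) (ξ : ℝ) : EReal :=
  sSup (Real.toEReal '' {l : ℝ |
    {x : Fin (n + 1) → ℤ | x ≠ 0 ∧ ∀ m : Fin (n + 1), 1 ≤ (m : ℕ) →
      |(x 0 : ℝ) * ξ ^ (m : ℕ) - (x m : ℝ)| ≤ vecNorm x ^ (-l)}.Infinite})

/-- The polynomial `Q(x) = (Mx)^k · P(1/(Mx) + r)`, i.e. `∑_{j=0}^{k} a_j M^{k−j} x^{k−j}`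
where `P(x + r) = ∑_j a_j x^j`. -/
noncomputable def Qpoly (k : ℕ) (M : ℤ) (r : ℤ) (P : Polynomial ℤ) : Polynomial ℤ :=
  ∑ j ∈ Finset.range (k + 1),
    Polynomial.C ((P.comp (Polynomial.X + Polynomial.C r)).coeff j * M ^ (k - j)) *
      Polynomial.X ^ (k - j)

/-! ### Auxiliary lemmas -/

section Aux

lemma natAbs_coeff_le (P : ℤ[X]) (i : ℕ) :
    (P.coeff i).natAbs ≤ P.support.sup fun j => (P.coeff j).natAbs := by
  by_cases h : i ∈ P.support
  · exact Finset.le_sup (f := fun j => (P.coeff j).natAbs) h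
  · simp [Polynomial.notMem_support_iff.1 h]

lemma natAbs_cast_abs (x : ℤ) : ((x.natAbs : ℕ) : ℝ) = |(x : ℝ)| := by
  rw [← Int.cast_abs, Int.abs_eq_natAbs, Int.cast_natCast]

lemma natAbs_le_of_cast_le {x y : ℤ} (h : |(x:ℝ)| ≤ |(y:ℝ)|) : x.natAbs ≤ y.natAbs := by
  have := h
  rw [← natAbs_cast_abs, ← natAbs_cast_abs] at this
  exact_mod_cast this

lemma abs_coeff_le_intPolyNorm (P : ℤ[X]) (i : ℕ) :
    |(P.coeff i : ℝ)| ≤ intPolyNorm P := by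
  rw [← Int.cast_abs, intPolyNorm, Int.abs_eq_natAbs]
  exact_mod_cast natAbs_coeff_le P i

lemma intPolyNorm_nonneg (P : ℤ[X]) : 0 ≤ intPolyNorm P := Nat.cast_nonneg _

lemma one_le_intPolyNorm {P : ℤ[X]} (h : P ≠ 0) : 1 ≤ intPolyNorm P := by
  obtain ⟨i, hi⟩ := Polynomial.support_nonempty.2 h
  have h1 : 1 ≤ (P.coeff i).natAbs := Int.natAbs_pos.2 (Polynomial.mem_support_iff.1 hi)
  have := h1.trans (natAbs_coeff_le P i)
  unfold intPolyNorm
  exact_mod_cast this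

lemma intPolyNorm_eq_coeff {P : ℤ[X]} {m : ℕ}
    (h : ∀ i, (P.coeff i).natAbs ≤ (P.coeff m).natAbs) :
    intPolyNorm P = ((P.coeff m).natAbs : ℝ) := by
  unfold intPolyNorm
  congr 1
  refine le_antisymm (Finset.sup_le fun i _ => h i) (natAbs_coeff_le P m)

lemma finite_polys (k : ℕ) (T : ℝ) :
    {P : ℤ[X] | P.natDegree ≤ k ∧ intPolyNorm P ≤ T}.Finite := by
  obtain ⟨n, hn⟩ := exists_nat_ge T
  apply Set.Finite.subset (Set.Finite.image (f := fun c : Fin (k+1) → ℤ => ∑ i, Polynomial.C (c i) * Polynomial.X ^ (i : ℕ))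
    (Set.Finite.pi fun _ => (Set.finite_Icc (-(n:ℤ)) n)))
  rintro P ⟨hd, hT⟩
  refine ⟨fun i => P.coeff i, fun i _ => ?_, ?_⟩
  · have := abs_coeff_le_intPolyNorm P i
    have h2 : |(P.coeff i : ℝ)| ≤ (n : ℝ) := this.trans (hT.trans hn)
    have : |P.coeff i| ≤ (n : ℤ) := by exact_mod_cast h2
    rw [abs_le] at this
    exact Set.mem_Icc.2 this
  · show ∑ i : Fin (k+1), Polynomial.C (P.coeff i) * Polynomial.X ^ (i:ℕ) = P
    rw [Fin.sum_univ_eq_sum_range (fun i => Polynomial.C (P.coeff i) * Polynomial.X ^ i)]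
    simp_rw [Polynomial.C_mul_X_pow_eq_monomial]
    exact (Polynomial.as_sum_range' P (k+1) (Nat.lt_succ_of_le hd)).symm

lemma abs_eval_le {P : ℤ[X]} {k : ℕ} (h : P.natDegree ≤ k) (r : ℤ) :
    |((P.eval r : ℤ) : ℝ)| ≤ (k+1) * intPolyNorm P * (1+|(r:ℝ)|)^k := by
  have he : P.eval r = (∑ i ∈ Finset.range (k+1), P.coeff i * r ^ i : ℤ) :=
    eval_eq_sum_range' (Nat.lt_succ_of_le h) r
  have hb : ∀ i ∈ Finset.range (k+1), |(P.coeff i : ℝ) * (r:ℝ)^i| ≤ intPolyNorm P * (1+|(r:ℝ)|)^k := by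
    intro i hi
    rw [abs_mul, abs_pow]
    have h1 := abs_coeff_le_intPolyNorm P i
    have h2 : |(r:ℝ)|^i ≤ (1+|(r:ℝ)|)^k := by
      calc |(r:ℝ)|^i ≤ (1+|(r:ℝ)|)^i := pow_le_pow_left₀ (abs_nonneg _) (by linarith) i
        _ ≤ (1+|(r:ℝ)|)^k := pow_le_pow_right₀ (by linarith [abs_nonneg (r:ℝ)]) (Nat.lt_succ_iff.1 (Finset.mem_range.1 hi))
    exact mul_le_mul h1 h2 (by positivity) (intPolyNorm_nonneg P)
  calc |((P.eval r : ℤ) : ℝ)| = |∑ i ∈ Finset.range (k+1), (P.coeff i : ℝ) * (r:ℝ)^i| := by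
        rw [he]; push_cast; ring_nf
        congr 1; exact Finset.sum_congr rfl fun _ _ => mul_comm _ _
    _ ≤ ∑ i ∈ Finset.range (k+1), |(P.coeff i : ℝ) * (r:ℝ)^i| := Finset.abs_sum_le_sum_abs _ _
    _ ≤ ∑ _i ∈ Finset.range (k+1), intPolyNorm P * (1+|(r:ℝ)|)^k := Finset.sum_le_sum hb
    _ = (k+1) * intPolyNorm P * (1+|(r:ℝ)|)^k := by
        rw [Finset.sum_const, Finset.card_range]; push_cast; ring

lemma choose_le_two_pow (m j : ℕ) : m.choose j ≤ 2 ^ m := by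
  rcases le_or_gt j m with h | h
  · calc m.choose j ≤ ∑ i ∈ Finset.range (m+1), m.choose i :=
        Finset.single_le_sum (fun i _ => Nat.zero_le _) (Finset.mem_range.2 (Nat.lt_succ_of_le h))
    _ = 2 ^ m := Nat.sum_range_choose m
  · simp [Nat.choose_eq_zero_of_lt h]

lemma intPolyNorm_hasseDeriv_le {P : ℤ[X]} {k : ℕ} (h : P.natDegree ≤ k) (j : ℕ) :
    intPolyNorm (hasseDeriv j P) ≤ 2^k * intPolyNorm P := by
  unfold intPolyNorm
  rw [← Nat.cast_ofNat (n := 2), ← Nat.cast_pow, ← Nat.cast_mul, Nat.cast_le]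
  refine Finset.sup_le fun i _ => ?_
  rw [hasseDeriv_coeff]
  rcases le_or_gt (i + j) k with hik | hik
  · rw [Int.natAbs_mul]
    calc ((i+j).choose j : ℤ).natAbs * (P.coeff (i+j)).natAbs
        ≤ 2^k * (P.coeff (i+j)).natAbs := by
          apply Nat.mul_le_mul_right
          simpa using (choose_le_two_pow (i+j) j).trans (Nat.pow_le_pow_right (by norm_num) hik)
      _ ≤ 2^k * P.support.sup fun l => (P.coeff l).natAbs :=
          Nat.mul_le_mul_left _ (natAbs_coeff_le P _)
  · rw [coeff_eq_zero_of_natDegree_lt (lt_of_le_of_lt h hik)]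
    simp

lemma taylor_coeff_bound {P : ℤ[X]} {k : ℕ} (h : P.natDegree ≤ k) (r : ℤ) (j : ℕ) :
    |(((taylor r P).coeff j : ℤ) : ℝ)| ≤ (k+1) * 2^k * (1+|(r:ℝ)|)^k * intPolyNorm P := by
  rw [taylor_coeff]
  have hd : (hasseDeriv j P).natDegree ≤ k := (natDegree_hasseDeriv_le P j).trans (by omega)
  calc |(((hasseDeriv j P).eval r : ℤ) : ℝ)| ≤ (k+1) * intPolyNorm (hasseDeriv j P) * (1+|(r:ℝ)|)^k :=
        abs_eval_le hd r
    _ ≤ (k+1) * (2^k * intPolyNorm P) * (1+|(r:ℝ)|)^k := by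
        have := intPolyNorm_hasseDeriv_le h j
        gcongr
    _ = (k+1) * 2^k * (1+|(r:ℝ)|)^k * intPolyNorm P := by ring

lemma lagrange_bound (k : ℕ) (t : Fin (k+1) → ℝ) (ht : Function.Injective t) :
    ∃ C : ℝ, 1 ≤ C ∧ ∀ f : ℝ[X], f.natDegree ≤ k → ∀ j,
      |f.coeff j| ≤ C * Finset.univ.sup' Finset.univ_nonempty (fun i => |f.eval (t i)|) := by
  classical
  set C : ℝ := 1 + ∑ i : Fin (k+1), ∑ j ∈ Finset.range (k+1), |(Lagrange.basis Finset.univ t i).coeff j| with hC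
  have hCpos : 1 ≤ C := by
    have : (0:ℝ) ≤ ∑ i : Fin (k+1), ∑ j ∈ Finset.range (k+1), |(Lagrange.basis Finset.univ t i).coeff j| := by positivity
    linarith
  refine ⟨C, hCpos, fun f hf j => ?_⟩
  have hsup0 : (0:ℝ) ≤ Finset.univ.sup' Finset.univ_nonempty (fun i => |f.eval (t i)|) :=
    le_trans (abs_nonneg _) (Finset.le_sup' (f := fun i => |f.eval (t i)|) (Finset.mem_univ 0))
  rcases le_or_gt j k with hj | hj
  · have hdeg : f.degree < (Finset.univ : Finset (Fin (k+1))).card := by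
      rw [Finset.card_univ, Fintype.card_fin]
      exact lt_of_le_of_lt degree_le_natDegree (by exact_mod_cast Nat.lt_succ_of_le hf)
    have heq := Lagrange.eq_interpolate (f := f) ht.injOn hdeg
    have hcoeff : f.coeff j = ∑ i : Fin (k+1), f.eval (t i) * (Lagrange.basis Finset.univ t i).coeff j := by
      conv_lhs => rw [heq]
      rw [Lagrange.interpolate_apply, finset_sum_coeff]
      exact Finset.sum_congr rfl fun i _ => by rw [coeff_C_mul]
    rw [hcoeff]
    calc |∑ i : Fin (k+1), f.eval (t i) * (Lagrange.basis Finset.univ t i).coeff j|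
        ≤ ∑ i : Fin (k+1), |f.eval (t i)| * |(Lagrange.basis Finset.univ t i).coeff j| := by
          refine (Finset.abs_sum_le_sum_abs _ _).trans (le_of_eq ?_)
          exact Finset.sum_congr rfl fun i _ => abs_mul _ _
      _ ≤ ∑ i : Fin (k+1), (Finset.univ.sup' Finset.univ_nonempty (fun i => |f.eval (t i)|)) * |(Lagrange.basis Finset.univ t i).coeff j| := by
          refine Finset.sum_le_sum fun i _ => ?_
          exact mul_le_mul_of_nonneg_right (Finset.le_sup' (f := fun i => |f.eval (t i)|) (Finset.mem_univ i)) (abs_nonneg _)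
      _ = (Finset.univ.sup' Finset.univ_nonempty (fun i => |f.eval (t i)|)) * ∑ i : Fin (k+1), |(Lagrange.basis Finset.univ t i).coeff j| := by
          rw [Finset.mul_sum]
      _ ≤ (Finset.univ.sup' Finset.univ_nonempty (fun i => |f.eval (t i)|)) * C := by
          refine mul_le_mul_of_nonneg_left ?_ hsup0
          rw [hC]
          have : ∑ i : Fin (k+1), |(Lagrange.basis Finset.univ t i).coeff j|
              ≤ ∑ i : Fin (k+1), ∑ j' ∈ Finset.range (k+1), |(Lagrange.basis Finset.univ t i).coeff j'| := by
            refine Finset.sum_le_sum fun i _ => ?_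
            exact Finset.single_le_sum (f := fun j' => |(Lagrange.basis Finset.univ t i).coeff j'|)
              (fun _ _ => abs_nonneg _) (Finset.mem_range.2 (Nat.lt_succ_of_le hj))
          linarith
      _ = C * _ := mul_comm _ _
  · rw [coeff_eq_zero_of_natDegree_lt (lt_of_le_of_lt hf hj)]
    simpa using mul_nonneg (by linarith) hsup0

lemma exists_eval_large (k : ℕ) (t : Fin (k+1) → ℤ) (ht : Function.Injective t) :
    ∃ C : ℝ, 1 ≤ C ∧ ∀ P : ℤ[X], P.natDegree ≤ k →
      ∃ i, intPolyNorm P ≤ C * |((P.eval (t i) : ℤ) : ℝ)| := by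
  obtain ⟨C, hC1, hC⟩ := lagrange_bound k (fun i => ((t i : ℤ) : ℝ))
    (fun a b hab => ht ((@Int.cast_injective ℝ _).comp (fun x y h => h) (by simpa using hab)))
  refine ⟨C, hC1, fun P hP => ?_⟩
  by_cases hP0 : P = 0
  · exact ⟨0, by simp [hP0, intPolyNorm]⟩
  set f : ℝ[X] := P.map (Int.castRingHom ℝ) with hf
  have hfd : f.natDegree ≤ k := (natDegree_map_le).trans hP
  have hfe : ∀ i, f.eval ((t i : ℤ) : ℝ) = ((P.eval (t i) : ℤ) : ℝ) := by
    intro i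
    rw [hf, eval_map]
    exact eval₂_at_apply (Int.castRingHom ℝ) (t i)
  have hfc : ∀ j, f.coeff j = ((P.coeff j : ℤ) : ℝ) := fun j => coeff_map _ j
  obtain ⟨i₀, -, hi₀⟩ := Finset.exists_mem_eq_sup' (Finset.univ_nonempty)
    (fun i : Fin (k+1) => |f.eval ((t i : ℤ) : ℝ)|)
  refine ⟨i₀, ?_⟩
  obtain ⟨m, -, hm⟩ := Finset.exists_mem_eq_sup P.support (Polynomial.support_nonempty.2 hP0)
    (fun i => (P.coeff i).natAbs)
  have : intPolyNorm P = |((P.coeff m : ℤ) : ℝ)| := by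
    rw [intPolyNorm, hm, ← Int.cast_abs, Int.abs_eq_natAbs, Int.cast_natCast]
  rw [this]
  have := hC f hfd m
  rw [hfc m] at this
  refine this.trans (le_of_eq ?_)
  rw [hi₀, hfe]

lemma Qpoly_eq (k : ℕ) (M r : ℤ) (P : ℤ[X]) :
    Qpoly k M r P = ∑ j ∈ Finset.range (k + 1),
      Polynomial.C ((taylor r P).coeff j * M ^ (k - j)) * Polynomial.X ^ (k - j) := by
  unfold Qpoly
  simp_rw [taylor_apply]

lemma Qpoly_coeff_le {k : ℕ} (M r : ℤ) (P : ℤ[X]) {i : ℕ} (hi : i ≤ k) :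
    (Qpoly k M r P).coeff i = (taylor r P).coeff (k - i) * M ^ i := by
  rw [Qpoly_eq, finset_sum_coeff]
  simp_rw [coeff_C_mul, coeff_X_pow, mul_ite, mul_one, mul_zero]
  rw [Finset.sum_eq_single_of_mem (k - i) (Finset.mem_range.2 (by omega))]
  · simp [Nat.sub_sub_self hi]
  · intro j hj hne
    have hj' := Finset.mem_range.1 hj
    rw [if_neg]
    intro h
    exact hne (by omega)

lemma Qpoly_coeff_gt {k : ℕ} (M r : ℤ) (P : ℤ[X]) {i : ℕ} (hi : k < i) :
    (Qpoly k M r P).coeff i = 0 := by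
  rw [Qpoly_eq, finset_sum_coeff]
  refine Finset.sum_eq_zero fun j hj => ?_
  rw [coeff_C_mul, coeff_X_pow, if_neg (by omega), mul_zero]

lemma Qpoly_natDegree_le (k : ℕ) (M r : ℤ) (P : ℤ[X]) : (Qpoly k M r P).natDegree ≤ k := by
  refine natDegree_le_iff_coeff_eq_zero.2 fun i hi => Qpoly_coeff_gt M r P hi

lemma Qpoly_injOn (k : ℕ) (M r : ℤ) (hM : M ≠ 0) :
    Set.InjOn (Qpoly k M r) {P : ℤ[X] | P.natDegree ≤ k} := by
  intro P hP Q hQ h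
  have ht : taylor r P = taylor r Q := by
    ext j
    rcases le_or_gt j k with hj | hj
    · have h1 := Qpoly_coeff_le M r P (Nat.sub_le k j)
      have h2 := Qpoly_coeff_le M r Q (Nat.sub_le k j)
      rw [h] at h1
      rw [h2] at h1
      rw [Nat.sub_sub_self hj] at h1
      exact mul_right_cancel₀ (pow_ne_zero _ hM) h1.symm
    · rw [coeff_eq_zero_of_natDegree_lt, coeff_eq_zero_of_natDegree_lt]
      · rw [natDegree_taylor]; exact lt_of_le_of_lt hQ hj
      · rw [natDegree_taylor]; exact lt_of_le_of_lt hP hj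
  exact taylor_injective r ht

lemma Qpoly_aeval {k : ℕ} (M r : ℤ) {P : ℤ[X]} (hP : P.natDegree ≤ k) {ζ : ℝ}
    (hζ : (M : ℝ) * ζ ≠ 0) :
    Polynomial.aeval ζ (Qpoly k M r P) =
      ((M:ℝ) * ζ)^k * Polynomial.aeval (((M:ℝ) * ζ)⁻¹ + (r:ℝ)) P := by
  have hrhs : Polynomial.aeval (((M:ℝ) * ζ)⁻¹ + (r:ℝ)) P
      = Polynomial.aeval (((M:ℝ) * ζ)⁻¹) (taylor r P) := by
    rw [taylor_apply, aeval_comp]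
    simp
  rw [hrhs]
  have hdeg : (taylor r P).natDegree < k + 1 := by
    rw [natDegree_taylor]; exact Nat.lt_succ_of_le hP
  rw [Polynomial.aeval_eq_sum_range' hdeg, Qpoly_eq, map_sum, Finset.mul_sum]
  refine Finset.sum_congr rfl fun j hj => ?_
  have hjk : j ≤ k := Nat.lt_succ_iff.1 (Finset.mem_range.1 hj)
  rw [map_mul, map_pow, aeval_X, aeval_C]
  have hMζ : ((M:ℝ) * ζ) ^ k * (((taylor r P).coeff j) • (((M:ℝ)*ζ)⁻¹)^j)
      = ((taylor r P).coeff j : ℝ) * ((M:ℝ)*ζ)^(k - j) := by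
    rw [zsmul_eq_mul, pow_sub₀ _ hζ hjk, inv_pow]
    ring
  rw [hMζ]
  have : ((algebraMap ℤ ℝ) ((taylor r P).coeff j * M ^ (k - j))) = ((taylor r P).coeff j : ℝ) * (M:ℝ)^(k-j) := by
    push_cast
    ring_nf
    norm_cast
  rw [this, mul_pow]
  ring

lemma rpow_transfer {ω ω' C1 C2 H HQ : ℝ} (hw : ω' < ω) (hC1 : 1 ≤ C1) (hC2 : 1 ≤ C2)
    (hH : Real.exp ((|ω'| * (Real.log C1 + Real.log C2)) / (ω - ω')) ≤ H)
    (hHQ : 1 ≤ HQ) (hlow : H / C1 ≤ HQ) (hhigh : HQ ≤ C2 * H) :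
    H ^ (-ω) ≤ HQ ^ (-ω') := by
  have hlC1 : 0 ≤ Real.log C1 := Real.log_nonneg hC1
  have hlC2 : 0 ≤ Real.log C2 := Real.log_nonneg hC2
  set B := Real.log C1 + Real.log C2 with hB
  have hB0 : 0 ≤ B := by linarith
  have harg : 0 ≤ |ω'| * B / (ω - ω') := div_nonneg (mul_nonneg (abs_nonneg _) hB0) (by linarith)
  have hH1 : 1 ≤ H := le_trans (Real.one_le_exp harg) hH
  have hHpos : 0 < H := by linarith
  have hHQpos : 0 < HQ := by linarith
  have hL : |ω'| * B / (ω - ω') ≤ Real.log H := by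
    calc |ω'| * B / (ω - ω') = Real.log (Real.exp (|ω'| * B / (ω - ω'))) := (Real.log_exp _).symm
      _ ≤ Real.log H := Real.log_le_log (Real.exp_pos _) hH
  have hLB : |ω'| * B ≤ ω * Real.log H - ω' * Real.log H := by
    rw [div_le_iff₀ (by linarith : (0:ℝ) < ω - ω')] at hL
    nlinarith [hL]
  have hup : Real.log HQ ≤ Real.log H + Real.log C2 := by
    calc Real.log HQ ≤ Real.log (C2 * H) := Real.log_le_log hHQpos hhigh
      _ = Real.log C2 + Real.log H := Real.log_mul (by linarith) (by linarith)
      _ = _ := by ring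
  have hdown : Real.log H - Real.log C1 ≤ Real.log HQ := by
    have h2 : Real.log (H / C1) ≤ Real.log HQ := Real.log_le_log (by positivity) hlow
    rwa [Real.log_div (by linarith) (by linarith)] at h2
  have habs : |(-ω') * (Real.log HQ - Real.log H)| ≤ |ω'| * B := by
    rw [abs_mul, abs_neg]
    refine mul_le_mul_of_nonneg_left ?_ (abs_nonneg _)
    rw [abs_le]
    constructor <;> linarith
  have h1 : -(|ω'| * B) ≤ (-ω') * (Real.log HQ - Real.log H) :=
    (neg_le_neg habs).trans (neg_abs_le _)
  have hident : (-ω') * (Real.log HQ - Real.log H) = -(ω' * Real.log HQ) + ω' * Real.log H := by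
    ring
  have hcore : Real.log H * (-ω) ≤ Real.log HQ * (-ω') := by nlinarith [h1, hLB, hident]
  rw [Real.rpow_def_of_pos hHpos, Real.rpow_def_of_pos hHQpos]
  exact Real.exp_le_exp.2 hcore

end Aux
section Crux

lemma crux (k : ℕ) (hk : 1 ≤ k) (w : ℝ) (ξ : ℝ) (h : (w:EReal) < omegaExp k ξ) :
    ∃ r M : ℤ, 1 ≤ M ∧ 1 ≤ ξ - r ∧ ξ - r ≤ k + 2 ∧
      (w:EReal) < omegaLeadExp k (((M:ℝ) * (ξ - r))⁻¹) := by
  classical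
  obtain ⟨b, hb, hwb⟩ := lt_sSup_iff.1 h
  obtain ⟨ω, hωS, rfl⟩ := hb
  have hwω : w < ω := by exact_mod_cast hwb
  set S := {P : Polynomial ℤ | P ≠ 0 ∧ P.natDegree ≤ k ∧
      |Polynomial.aeval ξ P| ≤ intPolyNorm P ^ (-ω)} with hS
  -- interpolation points near ξ
  set N : ℤ := ⌈ξ⌉ with hN
  have hN1 : ξ ≤ N := Int.le_ceil ξ
  have hN2 : (N:ℝ) < ξ + 1 := Int.ceil_lt_add_one ξ
  set t : Fin (k+1) → ℤ := fun i => N - 2 - i with ht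
  have htinj : Function.Injective t := by
    intro a b hab
    simp only [ht] at hab
    have : ((a:ℕ):ℤ) = ((b:ℕ):ℤ) := by omega
    exact Fin.ext (by exact_mod_cast this)
  have htlow : ∀ i, 1 ≤ ξ - t i := by
    intro i
    have h0 : (0:ℝ) ≤ ((i:ℕ):ℝ) := Nat.cast_nonneg _
    simp only [ht]
    push_cast
    linarith
  have hthigh : ∀ i, ξ - t i ≤ k + 2 := by
    intro i
    have h0 : ((i:ℕ):ℝ) ≤ k := by exact_mod_cast Nat.lt_succ_iff.1 i.isLt
    simp only [ht]
    push_cast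
    linarith
  obtain ⟨C, hC1, hC⟩ := exists_eval_large k t htinj
  have hCpos : (0:ℝ) < C := by linarith
  -- pigeonhole over the k+1 points
  have hpig : ∃ i, {P | P ∈ S ∧ intPolyNorm P ≤ C * |((P.eval (t i) : ℤ):ℝ)|}.Infinite := by
    by_contra hcon
    push_neg at hcon
    refine hωS (Set.Finite.subset (Set.finite_iUnion hcon) ?_)
    intro P hP
    obtain ⟨i, hi⟩ := hC P hP.2.1
    exact Set.mem_iUnion.2 ⟨i, hP, hi⟩
  obtain ⟨i₀, hSi⟩ := hpig
  set r : ℤ := t i₀ with hr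
  have hξr1 : 1 ≤ ξ - r := htlow i₀
  have hξr2 : ξ - r ≤ k + 2 := hthigh i₀
  have hξrne : ξ - (r:ℝ) ≠ 0 := by linarith
  -- constants
  set C₂ : ℝ := (k+1) * 2^k * (1+|(r:ℝ)|)^k with hC₂
  have hC₂1 : 1 ≤ C₂ := by
    have e1 : (1:ℝ) ≤ (k+1:ℝ) := by
      have : (0:ℝ) ≤ (k:ℝ) := Nat.cast_nonneg _
      linarith
    have e2 : (1:ℝ) ≤ 2^k := one_le_pow₀ (by norm_num)
    have e3 : (1:ℝ) ≤ (1+|(r:ℝ)|)^k := one_le_pow₀ (by linarith [abs_nonneg (r:ℝ)])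
    calc (1:ℝ) = 1 * 1 * 1 := by ring
      _ ≤ (k+1:ℝ) * 2^k * (1+|(r:ℝ)|)^k := by
        refine mul_le_mul (mul_le_mul e1 e2 (by norm_num) (by linarith)) e3 (by norm_num) ?_
        nlinarith
  set M : ℤ := max 1 ⌈C * C₂⌉ with hM
  have hM1 : (1:ℤ) ≤ M := le_max_left _ _
  have hM1R : (1:ℝ) ≤ (M:ℝ) := by exact_mod_cast hM1
  have hMne : (M:ℝ) ≠ 0 := by linarith
  have hMr : C * C₂ ≤ (M:ℝ) := by
    calc C * C₂ ≤ (⌈C * C₂⌉ : ℝ) := Int.le_ceil _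
      _ ≤ (M:ℝ) := by exact_mod_cast le_max_right (1:ℤ) ⌈C * C₂⌉
  set ζ : ℝ := ((M:ℝ) * (ξ - r))⁻¹ with hζdef
  have hMζ : (M:ℝ) * ζ = (ξ - (r:ℝ))⁻¹ := by
    rw [hζdef, mul_inv]
    field_simp
  have hMζne : (M:ℝ) * ζ ≠ 0 := by
    rw [hMζ]
    exact inv_ne_zero hξrne
  have hpoint : ((M:ℝ) * ζ)⁻¹ + (r:ℝ) = ξ := by
    rw [hMζ, inv_inv]
    ring
  -- exponents and threshold
  set ω' : ℝ := (w + ω)/2 with hω'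
  have hwω' : w < ω' := by rw [hω']; linarith
  have hω'ω : ω' < ω := by rw [hω']; linarith
  set C2' : ℝ := C₂ * (M:ℝ)^k with hC2'
  have hMk1 : (1:ℝ) ≤ (M:ℝ)^k := one_le_pow₀ hM1R
  have hC2'1 : 1 ≤ C2' := by
    calc (1:ℝ) = 1 * 1 := by ring
      _ ≤ C₂ * (M:ℝ)^k := mul_le_mul hC₂1 hMk1 (by norm_num) (by linarith)
  set T₀ : ℝ := Real.exp ((|ω'| * (Real.log C + Real.log C2')) / (ω - ω')) with hT₀
  -- the infinite family with large height
  set S2 := {P | P ∈ S ∧ intPolyNorm P ≤ C * |((P.eval r : ℤ):ℝ)|} \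
      {P : Polynomial ℤ | P.natDegree ≤ k ∧ intPolyNorm P ≤ T₀} with hS2
  have hS2inf : S2.Infinite := hSi.diff (finite_polys k T₀)
  have hS2deg : S2 ⊆ {P : Polynomial ℤ | P.natDegree ≤ k} := fun P hP => hP.1.1.2.1
  -- the target set
  set Lset := {Q : Polynomial ℤ | Q ≠ 0 ∧ Q.natDegree ≤ k ∧
      ((Q.coeff k).natAbs : ℝ) = intPolyNorm Q ∧
      |Polynomial.aeval ζ Q| ≤ intPolyNorm Q ^ (-ω')} with hLset
  have key : ∀ P ∈ S2, Qpoly k M r P ∈ Lset := by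
    rintro P ⟨⟨⟨hP0, hPd, hPapprox⟩, hPC⟩, hPT⟩
    have hH1 : 1 ≤ intPolyNorm P := one_le_intPolyNorm hP0
    have hT0le : T₀ ≤ intPolyNorm P := by
      by_contra hcon
      exact hPT ⟨hPd, by linarith⟩
    have heval0 : (taylor r P).coeff 0 = P.eval r := taylor_coeff_zero r P
    have ha0 : P.eval r ≠ 0 := by
      intro h0
      rw [h0] at hPC
      simp at hPC
      linarith
    have ha0abs : intPolyNorm P / C ≤ |((P.eval r : ℤ):ℝ)| := by
      rw [div_le_iff₀ hCpos]
      calc intPolyNorm P ≤ C * |((P.eval r : ℤ):ℝ)| := hPC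
        _ = |((P.eval r : ℤ):ℝ)| * C := mul_comm _ _
    have hupper : ∀ j, |(((taylor r P).coeff j : ℤ):ℝ)| ≤ C₂ * intPolyNorm P := by
      intro j
      refine (taylor_coeff_bound hPd r j).trans (le_of_eq ?_)
      rw [hC₂]; try ring
    set Q := Qpoly k M r P with hQdef
    have hQk : Q.coeff k = P.eval r * M^k := by
      rw [hQdef, Qpoly_coeff_le M r P (le_refl k), Nat.sub_self, heval0]
    have hQk0 : Q.coeff k ≠ 0 :=
      hQk ▸ mul_ne_zero ha0 (pow_ne_zero _ (by exact_mod_cast (by linarith : (1:ℤ) ≤ M).trans_lt' zero_lt_one |>.ne'))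
    have hQ0 : Q ≠ 0 := fun hq => hQk0 (by rw [hq, Polynomial.coeff_zero])
    have hQd : Q.natDegree ≤ k := Qpoly_natDegree_le k M r P
    -- coefficient domination
    have hdom : ∀ i, (Q.coeff i).natAbs ≤ (Q.coeff k).natAbs := by
      intro i
      rcases lt_or_ge k i with hik | hik
      · rw [hQdef, Qpoly_coeff_gt M r P hik]
        simp
      · rcases eq_or_lt_of_le hik with rfl | hik'
        · exact le_refl _
        apply natAbs_le_of_cast_le
        rw [hQk, hQdef, Qpoly_coeff_le M r P hik]
        push_cast
        rw [abs_mul, abs_mul, abs_pow, abs_pow, abs_of_pos (by linarith : (0:ℝ) < (M:ℝ))]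
        have e1 : |(((taylor r P).coeff (k-i) : ℤ):ℝ)| ≤ C₂ * intPolyNorm P := hupper _
        have e2 : C₂ * intPolyNorm P ≤ C₂ * (C * |((P.eval r : ℤ):ℝ)|) :=
          mul_le_mul_of_nonneg_left hPC (by linarith)
        have e3 : C₂ * (C * |((P.eval r : ℤ):ℝ)|) = (C * C₂) * |((P.eval r : ℤ):ℝ)| := by ring
        have e4 : (C * C₂) * |((P.eval r : ℤ):ℝ)| ≤ (M:ℝ) * |((P.eval r : ℤ):ℝ)| :=
          mul_le_mul_of_nonneg_right hMr (abs_nonneg _)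
        have habs_le : |(((taylor r P).coeff (k-i) : ℤ):ℝ)| ≤ (M:ℝ) * |((P.eval r : ℤ):ℝ)| := by
          linarith
        have hMpow : (M:ℝ) * (M:ℝ)^i ≤ (M:ℝ)^k := by
          rw [← pow_succ']
          exact pow_le_pow_right₀ hM1R hik'
        calc |(((taylor r P).coeff (k-i) : ℤ):ℝ)| * (M:ℝ)^i
            ≤ ((M:ℝ) * |((P.eval r : ℤ):ℝ)|) * (M:ℝ)^i :=
              mul_le_mul_of_nonneg_right habs_le (by positivity)
          _ = |((P.eval r : ℤ):ℝ)| * ((M:ℝ) * (M:ℝ)^i) := by ring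
          _ ≤ |((P.eval r : ℤ):ℝ)| * (M:ℝ)^k :=
              mul_le_mul_of_nonneg_left hMpow (abs_nonneg _)
    have hlead : intPolyNorm Q = ((Q.coeff k).natAbs : ℝ) := intPolyNorm_eq_coeff hdom
    have hHQval : intPolyNorm Q = |((P.eval r : ℤ):ℝ)| * (M:ℝ)^k := by
      rw [hlead, natAbs_cast_abs, hQk]
      push_cast
      rw [abs_mul, abs_pow, abs_of_pos (by linarith : (0:ℝ) < (M:ℝ))]
    have hHQ1 : 1 ≤ intPolyNorm Q := one_le_intPolyNorm hQ0
    have hlow : intPolyNorm P / C ≤ intPolyNorm Q := by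
      rw [hHQval]
      calc intPolyNorm P / C ≤ |((P.eval r : ℤ):ℝ)| := ha0abs
        _ ≤ |((P.eval r : ℤ):ℝ)| * (M:ℝ)^k :=
          le_mul_of_one_le_right (abs_nonneg _) hMk1
    have hhigh : intPolyNorm Q ≤ C2' * intPolyNorm P := by
      rw [hHQval, hC2']
      have := hupper 0
      rw [heval0] at this
      calc |((P.eval r : ℤ):ℝ)| * (M:ℝ)^k ≤ (C₂ * intPolyNorm P) * (M:ℝ)^k :=
            mul_le_mul_of_nonneg_right this (by positivity)
        _ = C₂ * (M:ℝ)^k * intPolyNorm P := by ring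
    have happQ : |Polynomial.aeval ζ Q| ≤ intPolyNorm P ^ (-ω) := by
      rw [hQdef, Qpoly_aeval M r hPd hMζne, hpoint, abs_mul]
      have habs1 : |((M:ℝ) * ζ)^k| ≤ 1 := by
        rw [hMζ, abs_pow, abs_inv, abs_of_pos (by linarith : (0:ℝ) < ξ - r)]
        refine pow_le_one₀ (by positivity) ?_
        rw [inv_le_one_iff₀]
        right; linarith
      calc |((M:ℝ) * ζ)^k| * |Polynomial.aeval ξ P| ≤ 1 * |Polynomial.aeval ξ P| :=
            mul_le_mul_of_nonneg_right habs1 (abs_nonneg _)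
        _ = |Polynomial.aeval ξ P| := one_mul _
        _ ≤ intPolyNorm P ^ (-ω) := hPapprox
    refine ⟨hQ0, hQd, hlead.symm, happQ.trans ?_⟩
    exact rpow_transfer hω'ω hC1 hC2'1 (by rw [← hT₀]; exact hT0le) hHQ1 hlow hhigh
  -- conclude
  have hLinf : Lset.Infinite := by
    refine Set.Infinite.mono ?_ ((hS2inf.image ((Qpoly_injOn k M r
      (by exact_mod_cast (by linarith : (0:ℤ) < M).ne')).mono hS2deg)))
    rintro Q ⟨P, hP, rfl⟩
    exact key P hP
  refine ⟨r, M, hM1, hξr1, hξr2, ?_⟩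
  have hle : (ω' : EReal) ≤ omegaLeadExp k ζ := le_sSup ⟨ω', hLinf, rfl⟩
  exact lt_of_lt_of_le (by exact_mod_cast hwω' : (w:EReal) < (ω':EReal)) hle

end Crux
section Final

lemma omegaLead_le_omega (k : ℕ) (ξ : ℝ) : omegaLeadExp k ξ ≤ omegaExp k ξ := by
  refine sSup_le_sSup (Set.image_mono ?_)
  intro ω hω
  exact hω.mono fun P hP => ⟨hP.1, hP.2.1, hP.2.2.2⟩

lemma lip_inv (M : ℤ) (hM : (1:ℝ) ≤ (M:ℝ)) (r : ℤ) {a : ℝ} (ha : 0 < a) :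
    LipschitzOnWith (Real.toNNReal (((M:ℝ) * a^2)⁻¹))
      (fun ζ : ℝ => (r:ℝ) + ((M:ℝ)*ζ)⁻¹) (Set.Ici a) := by
  have hM0 : (0:ℝ) < M := by linarith
  rw [lipschitzOnWith_iff_dist_le_mul]
  intro x hx y hy
  have hxa : a ≤ x := hx
  have hya : a ≤ y := hy
  have hx0 : 0 < x := lt_of_lt_of_le ha hxa
  have hy0 : 0 < y := lt_of_lt_of_le ha hya
  rw [Real.dist_eq, Real.dist_eq]
  have hcoe : ((Real.toNNReal (((M:ℝ) * a^2)⁻¹) : NNReal) : ℝ) = ((M:ℝ) * a^2)⁻¹ :=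
    Real.coe_toNNReal _ (by positivity)
  rw [hcoe]
  have key : (r:ℝ) + ((M:ℝ)*x)⁻¹ - ((r:ℝ) + ((M:ℝ)*y)⁻¹) = (y - x) / ((M:ℝ) * x * y) := by
    field_simp
    ring
  rw [key, abs_div]
  have habs : |(M:ℝ) * x * y| = (M:ℝ) * x * y := abs_of_pos (by positivity)
  rw [habs, abs_sub_comm]
  rw [div_le_iff₀ (by positivity : (0:ℝ) < (M:ℝ) * x * y)]
  have h1 : (M:ℝ) * a^2 ≤ (M:ℝ) * x * y := by nlinarith [mul_le_mul hxa hya ha.le hx0.le]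
  have h2 : ((M:ℝ) * a^2)⁻¹ * |x - y| * ((M:ℝ) * x * y) ≥ |x - y| := by
    rw [ge_iff_le]
    have h3 : (1:ℝ) ≤ ((M:ℝ) * a^2)⁻¹ * ((M:ℝ) * x * y) := by
      rw [inv_mul_eq_div, le_div_iff₀ (by positivity)]
      linarith
    calc |x - y| = |x - y| * 1 := (mul_one _).symm
      _ ≤ |x - y| * (((M:ℝ) * a^2)⁻¹ * ((M:ℝ) * x * y)) :=
          mul_le_mul_of_nonneg_left h3 (abs_nonneg _)
      _ = ((M:ℝ) * a^2)⁻¹ * |x - y| * ((M:ℝ) * x * y) := by ring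
  linarith

/-- The sets `{ξ : ω_k(ξ) > w}` and `{ξ : ω_k^lead(ξ) > w}` have the same
Hausdorff dimension. -/
theorem corollary2_gt (k : ℕ) (hk : 1 ≤ k) (w : ℝ) :
    dimH {ξ : ℝ | (w : EReal) < omegaExp k ξ} =
      dimH {ξ : ℝ | (w : EReal) < omegaLeadExp k ξ} := by
  set Slead := {ξ : ℝ | (w : EReal) < omegaLeadExp k ξ} with hSlead
  refine le_antisymm ?_ (dimH_mono fun ξ hξ => lt_of_lt_of_le hξ (omegaLead_le_omega k ξ))
  set g : ℤ × ℤ → ℝ → ℝ := fun p ζ => (p.1:ℝ) + ((p.2:ℝ)*ζ)⁻¹ with hg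
  set J : ℤ × ℤ → Set ℝ := fun p =>
    if 1 ≤ p.2 then Set.Ici (((p.2:ℝ)*(k+2))⁻¹) else ∅ with hJ
  have hcov : {ξ : ℝ | (w : EReal) < omegaExp k ξ} ⊆
      ⋃ p : ℤ × ℤ, g p '' (Slead ∩ J p) := by
    intro ξ hξ
    obtain ⟨r, M, hM1, h1, h2, hlt⟩ := crux k hk w ξ hξ
    have hM1R : (1:ℝ) ≤ (M:ℝ) := by exact_mod_cast hM1
    have hMpos : (0:ℝ) < (M:ℝ) := by linarith
    have hxr : (0:ℝ) < ξ - r := by linarith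
    refine Set.mem_iUnion.2 ⟨(r, M), ((M:ℝ)*(ξ - r))⁻¹, ⟨hlt, ?_⟩, ?_⟩
    · show ((M:ℝ)*(ξ - r))⁻¹ ∈ J (r, M)
      rw [hJ]
      simp only [if_pos hM1]
      refine Set.mem_Ici.2 ?_
      apply inv_anti₀ (by positivity)
      have : ((k:ℝ)+2) = (k+2 : ℝ) := by norm_num
      nlinarith
    · show (r:ℝ) + ((M:ℝ) * ((M:ℝ)*(ξ - r))⁻¹)⁻¹ = ξ
      have hMx : (M:ℝ) * ((M:ℝ)*(ξ - r))⁻¹ = (ξ - r)⁻¹ := by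
        rw [mul_inv]
        field_simp
      rw [hMx, inv_inv]
      ring
  refine (dimH_mono hcov).trans ?_
  rw [dimH_iUnion]
  refine iSup_le fun p => ?_
  by_cases hp : 1 ≤ p.2
  · have hM1R : (1:ℝ) ≤ (p.2:ℝ) := by exact_mod_cast hp
    have hapos : (0:ℝ) < (((p.2:ℝ))*(k+2))⁻¹ := by
      have : (0:ℝ) < (k:ℝ)+2 := by positivity
      positivity
    have hlip := lip_inv p.2 hM1R p.1 hapos
    have hJeq : J p = Set.Ici (((p.2:ℝ)*(k+2))⁻¹) := by rw [hJ]; simp only [if_pos hp]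
    have hsub : Slead ∩ J p ⊆ Set.Ici (((p.2:ℝ)*(k+2))⁻¹) := by
      rw [hJeq]; exact Set.inter_subset_right
    have := (hlip.mono hsub).dimH_image_le
    exact this.trans (dimH_mono Set.inter_subset_left)
  · rw [hJ]
    simp only [if_neg hp, Set.inter_empty, Set.image_empty, dimH_empty]
    exact zero_le

end Final
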